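/- Let 1 ≤ p < ∞ and let T : ℓ^p → ℓ^p be a continuous linear operator that is semi band preserving. Then for all f, g ∈ ℓ^p there exists h ∈ ℓ^p with supp(Th) = supp(Tf) ∩ supp(Tg). -/

import Mathlib

open scoped ENNReal

/-- Evaluation at a coordinate as a continuous linear map on `ℓ^p`. -/
private noncomputable def lpEvalCLM (p : ℝ≥0∞) [Fact (1 ≤ p)] (i : ℕ) :
    lp (fun _ : ℕ => ℝ) p →L[ℝ] ℝ :=
  LinearMap.mkContinuous
    { toFun := fun x => x i
      map_add' := fun _ _ => rfl
      map_smul' := fun _ _ => rfl }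
    1
    (fun x => by
      have hp0 : p ≠ 0 := (zero_lt_one.trans_le (Fact.out : (1:ℝ≥0∞) ≤ p)).ne'
      change ‖x i‖ ≤ 1 * ‖x‖
      simpa using lp.norm_apply_le_norm hp0 x i)

/-- If `T` is a semi band preserving continuous linear operator on `ℓ^p`
(`1 ≤ p < ∞`), then for all `f, g` the set `supp (T f) ∩ supp (T g)` is the support of some
element of the range of `T`. -/
theorem lp_sbp_exists_support_eq_inter
    (p : ℝ≥0∞) [Fact (1 ≤ p)] (hp : p ≠ ⊤)
    (T : lp (fun _ : ℕ => ℝ) p →L[ℝ] lp (fun _ : ℕ => ℝ) p)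
    (hSBP : ∀ f g : lp (fun _ : ℕ => ℝ) p,
      {n : ℕ | f n ≠ 0} ∩ {n : ℕ | T g n ≠ 0} = ∅ →
      {n : ℕ | T f n ≠ 0} ∩ {n : ℕ | T g n ≠ 0} = ∅)
    (f g : lp (fun _ : ℕ => ℝ) p) :
    ∃ h : lp (fun _ : ℕ => ℝ) p,
      {n : ℕ | T h n ≠ 0} = {n : ℕ | T f n ≠ 0} ∩ {n : ℕ | T g n ≠ 0} := by
  classical
  have hp0 : p ≠ 0 := (zero_lt_one.trans_le (Fact.out : (1:ℝ≥0∞) ≤ p)).ne'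
  have hptr : 0 < p.toReal := ENNReal.toReal_pos hp0 hp
  set e : ℕ → lp (fun _ : ℕ => ℝ) p := fun j => lp.single p j (1:ℝ) with he
  have he_ne : ∀ (j n : ℕ), n ≠ j → (e j : ℕ → ℝ) n = 0 := fun j n hn =>
    lp.single_apply_ne p j 1 hn
  -- coordinate expansion of `T x`
  have expand : ∀ (x : lp (fun _ : ℕ => ℝ) p) (i : ℕ),
      HasSum (fun j => x j * T (e j) i) (T x i) := by
    intro x i
    have h1 := lp.hasSum_single hp x
    have h2 := h1.mapL ((lpEvalCLM p i).comp T)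
    convert h2 using 2 with j
    have hsingle : lp.single p j (x j)
        = x j • (lp.single p j (1:ℝ) : lp (fun _ : ℕ => ℝ) p) := by
      rw [← lp.single_smul, smul_eq_mul, mul_one]
    rw [ContinuousLinearMap.comp_apply, hsingle, map_smul]
    show x j * T (e j) i = (x j • T (e j)) i
    rw [lp.coeFn_smul]
    rfl
    rfl
  -- the kernel inclusion coming from semi band preservation
  have hker : ∀ (j : ℕ) (x : lp (fun _ : ℕ => ℝ) p), T x j = 0 →
      ∀ i : ℕ, T (e j) i ≠ 0 → T x i = 0 := by
    intro j x hxj i hij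
    have hset : {n : ℕ | e j n ≠ 0} ∩ {n : ℕ | T x n ≠ 0} = ∅ := by
      ext n
      simp only [Set.mem_inter_iff, Set.mem_setOf_eq, Set.mem_empty_iff_false, iff_false,
        not_and]
      intro h1 h2
      rcases eq_or_ne n j with rfl | hn
      · exact h2 hxj
      · exact h1 (he_ne j n hn)
    have hconc := hSBP (e j) x hset
    rw [Set.eq_empty_iff_forall_notMem] at hconc
    by_contra hxi
    exact hconc i ⟨hij, hxi⟩
  -- proportionality of coordinate functionals
  have key : ∀ i j : ℕ, T (e j) i ≠ 0 →
      ∃ c : ℝ, c ≠ 0 ∧ ∀ x : lp (fun _ : ℕ => ℝ) p, T x i = c * T x j := by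
    intro i j hij
    have hd : T (e j) j ≠ 0 := fun h0 => hij (hker j (e j) h0 i hij)
    refine ⟨T (e j) i / T (e j) j, div_ne_zero hij hd, fun x => ?_⟩
    set y := x - (T x j / T (e j) j) • e j with hy
    have hTy : (T y : ℕ → ℝ)
        = (T x : ℕ → ℝ) - (T x j / T (e j) j) • (T (e j) : ℕ → ℝ) := by
      rw [hy, map_sub, map_smul, lp.coeFn_sub, lp.coeFn_smul]
    have hTy' : ∀ n, T y n = T x n - (T x j / T (e j) j) * T (e j) n := by
      intro n
      rw [hTy]
      simp
    have hyj : T y j = 0 := by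
      rw [hTy' j]
      field_simp
      ring
    have hyi := hker j y hyj i hij
    rw [hTy' i] at hyi
    have := sub_eq_zero.mp hyi
    rw [this]
    ring
  -- the two-sided support transfer
  have key2 : ∀ i j : ℕ, T (e j) i ≠ 0 →
      ((T f i ≠ 0 ∧ T g i ≠ 0) ↔ (T f j ≠ 0 ∧ T g j ≠ 0)) := by
    intro i j hij
    obtain ⟨c, hc, hx⟩ := key i j hij
    constructor
    · rintro ⟨h1, h2⟩
      rw [hx f] at h1
      rw [hx g] at h2
      exact ⟨(mul_ne_zero_iff.mp h1).2, (mul_ne_zero_iff.mp h2).2⟩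
    · rintro ⟨h1, h2⟩
      rw [hx f, hx g]
      exact ⟨mul_ne_zero hc h1, mul_ne_zero hc h2⟩
  -- the candidate element: restriction of `f` to the intersection of supports
  set hfun : ℕ → ℝ := fun n => if T f n ≠ 0 ∧ T g n ≠ 0 then f n else 0 with hhfun
  have hmem : Memℓp hfun p := by
    apply memℓp_gen
    refine Summable.of_nonneg_of_le (fun n => Real.rpow_nonneg (norm_nonneg _) _)
      (fun n => ?_) ((lp.memℓp f).summable hptr)
    refine Real.rpow_le_rpow (norm_nonneg _) ?_ hptr.le
    by_cases hn : T f n ≠ 0 ∧ T g n ≠ 0 <;> simp [hhfun, hn]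
  set h : lp (fun _ : ℕ => ℝ) p := ⟨hfun, hmem⟩ with hh
  have hcoe : ∀ n, (h : ℕ → ℝ) n = hfun n := fun _ => rfl
  have hin : ∀ i : ℕ, (T f i ≠ 0 ∧ T g i ≠ 0) → T h i = T f i := by
    intro i hi
    have e1 := expand h i
    have heq : (fun j => h j * T (e j) i) = fun j => f j * T (e j) i := by
      funext j
      by_cases hj : T f j ≠ 0 ∧ T g j ≠ 0
      · rw [hcoe j]
        simp [hhfun, hj]
      · have hz : T (e j) i = 0 := by
          by_contra hij
          exact hj ((key2 i j hij).mp hi)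
        rw [hz, mul_zero, mul_zero]
    rw [heq] at e1
    exact e1.unique (expand f i)
  have hout : ∀ i : ℕ, ¬(T f i ≠ 0 ∧ T g i ≠ 0) → T h i = 0 := by
    intro i hi
    have e1 := expand h i
    have heq : (fun j => h j * T (e j) i) = fun _ => (0:ℝ) := by
      funext j
      by_cases hj : T f j ≠ 0 ∧ T g j ≠ 0
      · have hz : T (e j) i = 0 := by
          by_contra hij
          exact hi ((key2 i j hij).mpr hj)
        rw [hz, mul_zero]
      · rw [hcoe j]
        simp [hhfun, hj]
    rw [heq] at e1
    exact e1.unique hasSum_zero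
  refine ⟨h, ?_⟩
  ext n
  simp only [Set.mem_inter_iff, Set.mem_setOf_eq]
  constructor
  · intro hn
    by_contra hc
    exact hn (hout n hc)
  · intro hn
    rw [hin n hn]
    exact hn.1
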